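/- Let p be a fixed point of X with index function f and let S be the set of starting vertices of p. Then S is nonempty; for each a ∈ S, letting m_a ≥ 0 be minimal with J e_{f(a+m_a)} = 0 and σ_a = {a, a+1, …, a+m_a} ⊆ ℤ/nℤ, the sets σ_a (a ∈ S) partition ℤ/nℤ; and the restriction map L ↦ ((L_i)_{i∈σ_a})_{a∈S} is a homeomorphism from X ∩ ∏_{i∈ℤ/nℤ} Z_{f(i)} onto the product ∏_{a∈S} Y_a, where Y_a = {(L_i)_{i∈σ_a} ∈ ∏_{i∈σ_a} Z_{f(i)} : J(L_{a+k}) ⊆ L_{a+k+1} for all 0 ≤ k < m_a}. -/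

import Mathlib

open LinearAlgebra.Projectivization Projectivization Filter Topology

noncomputable section

/-- Topology on the projectivization: quotient topology. -/
instance {K V : Type*} [DivisionRing K] [AddCommGroup V] [Module K V] [TopologicalSpace V] :
    TopologicalSpace (ℙ K V) :=
  inferInstanceAs (TopologicalSpace (Quotient (projectivizationSetoid K V)))

variable {M : ℕ}

/-- The index set `B`: `⟨l, i⟩` encodes the basis vector `v_{i+1}^{l+1}` of the
`(l+1)`-st Jordan block (both indices are 0-based here, 1-based in the paper). -/
abbrev Idx (j : Fin M → ℕ) : Type := Σ l : Fin M, Fin (j l)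

variable {j : Fin M → ℕ}

/-- `j_l − i` in the 1-based notation of the paper: the distance from the end of the block. -/
def col (b : Idx j) : ℕ := j b.1 - 1 - b.2.val

/-- The twisted lexicographic order on `B`:
`b < c` iff `col c < col b`, or `col b = col c` and the block of `b` is earlier. -/
def blt (b c : Idx j) : Prop := col c < col b ∨ (col b = col c ∧ b.1 < c.1)

/-- `b ≤ c` for the twisted lexicographic order. -/
def ble (b c : Idx j) : Prop := blt b c ∨ b = c

/-- The underlying vector space `V = ℂ^B`. -/
abbrev Vsp (j : Fin M → ℕ) : Type := Idx j → ℂ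

/-- The standard basis vector `e_b`. -/
def eVec (b : Idx j) : Vsp j := Pi.single b 1

lemma eVec_ne_zero (b : Idx j) : eVec b ≠ 0 := by
  intro h
  have := congrFun h b
  simp [eVec] at this

/-- The nilpotent Jordan map `J` with `J e_{(l,i)} = e_{(l,i+1)}`. -/
def Jmap (j : Fin M → ℕ) : Vsp j →ₗ[ℂ] Vsp j where
  toFun u c :=
    if h : 0 < c.2.val then
      u ⟨c.1, ⟨c.2.val - 1, lt_of_le_of_lt (Nat.sub_le _ _) c.2.isLt⟩⟩ else 0
  map_add' u v := by funext c; by_cases h : 0 < c.2.val <;> simp [h]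
  map_smul' a u := by funext c; by_cases h : 0 < c.2.val <;> simp [h]

/-- The quiver Grassmannian `X ⊆ ℙ(V)^{ℤ/nℤ}` of one-dimensional subrepresentations. -/
def QG (n : ℕ) (j : Fin M → ℕ) : Set (ZMod n → ℙ ℂ (Vsp j)) :=
  {L | ∀ i : ZMod n, (L i).submodule.map (Jmap j) ≤ (L (i + 1)).submodule}

/-- `p` is a fixed point of `X` with index function `f`. -/
def IsFixedPt (n : ℕ) (L : ZMod n → ℙ ℂ (Vsp j)) (f : ZMod n → Idx j) : Prop :=
  L ∈ QG n j ∧ ∀ i, L i = mk ℂ (eVec (f i)) (eVec_ne_zero (f i))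

/-- The cell `C_b ⊆ ℙ(V)`. -/
def Cb (b : Idx j) : Set (ℙ ℂ (Vsp j)) :=
  {x | ∃ (u : Vsp j) (hu : u ≠ 0), x = mk ℂ u hu ∧ u b ≠ 0 ∧ ∀ c, blt c b → u c = 0}

/-- The closed cell `Z_b ⊆ ℙ(V)`. -/
def Zb (b : Idx j) : Set (ℙ ℂ (Vsp j)) :=
  {x | ∃ (u : Vsp j) (hu : u ≠ 0), x = mk ℂ u hu ∧ ∀ c, blt c b → u c = 0}

/-- The BB-cell of the fixed point with index function `f`. -/
def cell (n : ℕ) (f : ZMod n → Idx j) : Set (ZMod n → ℙ ℂ (Vsp j)) :=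
  QG n j ∩ {L | ∀ i, L i ∈ Cb (f i)}

/-- Rescaling of coordinates by units, as a linear map. -/
def scaleV (c : Idx j → ℂˣ) : Vsp j →ₗ[ℂ] Vsp j where
  toFun u b := c b * u b
  map_add' u v := by funext b; simp [mul_add]
  map_smul' a u := by funext b; simp [smul_eq_mul]; ring

lemma scaleV_injective (c : Idx j → ℂˣ) : Function.Injective (scaleV c) := by
  intro u v h
  funext b
  have hb : (c b : ℂ) * u b = (c b : ℂ) * v b := congrFun h b
  exact mul_left_cancel₀ (Units.ne_zero (c b)) hb

/-- The weight of the `ℂ^×`-action on the coordinate `b`: `l − M(j_l − i)`. -/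
def wt (M : ℕ) {j : Fin M → ℕ} (b : Idx j) : ℤ := (b.1.val + 1 : ℤ) - M * col b

/-- The `ℂ^×`-action on `ℙ(V)`: `λ • e_b = λ^{wt b} e_b`. -/
def actP (lam : ℂˣ) : ℙ ℂ (Vsp j) → ℙ ℂ (Vsp j) :=
  Projectivization.map (scaleV fun b => lam ^ wt M b) (scaleV_injective _)

/-- The punctured-neighborhood filter of `0` in `ℂ`, pulled back to `ℂˣ`. -/
def zeroF : Filter ℂˣ := comap Units.val (𝓝 (0 : ℂ))

end
/-- The set of starting vertices of a fixed point with index function `f`. -/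
def startSet {M : ℕ} {j : Fin M → ℕ} (n : ℕ) (f : ZMod n → Idx j) : Set (ZMod n) :=
  {i | Jmap j (eVec (f (i - 1))) = 0}

/-- The segment `σ_a = {a, a+1, …, a + m a}` of `ℤ/nℤ`. -/
def sigmaSet (n : ℕ) (m : ZMod n → ℕ) (a : ZMod n) : Set (ZMod n) :=
  {x | ∃ k ≤ m a, x = a + (k : ZMod n)}

/-- The factor `Y_a`: tuples `(L_i)_{i ∈ σ_a}` with `L_i ∈ Z_{f(i)}` and
`J(L_{a+k}) ⊆ L_{a+k+1}` for all `0 ≤ k < m a`. -/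
def Ysp {M : ℕ} {j : Fin M → ℕ} (n : ℕ) (f : ZMod n → Idx j) (m : ZMod n → ℕ)
    (a : ZMod n) : Set (↥(sigmaSet n m a) → ℙ ℂ (Vsp j)) :=
  {L | (∀ i, L i ∈ Zb (f i.val)) ∧
    ∀ (k : ℕ) (hk : k < m a),
      (L ⟨a + (k : ZMod n), ⟨k, hk.le, rfl⟩⟩).submodule.map (Jmap j) ≤
        (L ⟨a + ((k + 1 : ℕ) : ZMod n), ⟨k + 1, hk, rfl⟩⟩).submodule}


section AuxLemmas
variable {M : ℕ} {j : Fin M → ℕ}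

lemma jmap_apply (u : Vsp j) (c : Idx j) :
    Jmap j u c = if _ : 0 < c.2.val then
      u ⟨c.1, ⟨c.2.val - 1, lt_of_le_of_lt (Nat.sub_le _ _) c.2.isLt⟩⟩ else 0 := rfl

lemma idx_eq_iff {b c : Idx j} : b = c ↔ b.1 = c.1 ∧ b.2.val = c.2.val := by
  constructor
  · rintro rfl; exact ⟨rfl, rfl⟩
  · obtain ⟨bl, x⟩ := b
    obtain ⟨cl, y⟩ := c
    rintro ⟨h1, h2⟩
    dsimp only at h1 h2
    subst h1
    exact congrArg (Sigma.mk bl) (Fin.ext h2)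

lemma eVec_apply (b c : Idx j) : eVec b c = if c = b then 1 else 0 := by
  simp [eVec, Pi.single_apply]

lemma jmap_eVec_of_lt (b : Idx j) (h : b.2.val + 1 < j b.1) :
    Jmap j (eVec b) = eVec ⟨b.1, ⟨b.2.val + 1, h⟩⟩ := by
  funext c
  rw [jmap_apply]
  by_cases hc : 0 < c.2.val
  · rw [dif_pos hc, eVec_apply, eVec_apply]
    simp only [idx_eq_iff, Fin.val_mk]
    have hlt := c.2.isLt
    split_ifs with h1 h2 h2
    · rfl
    · exact absurd ⟨h1.1, by have := h1.2; omega⟩ h2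
    · exact absurd ⟨h2.1, by have := h2.2; omega⟩ h1
    · rfl
  · rw [dif_neg hc, eVec_apply, eq_comm, ite_eq_right_iff]
    intro hcon
    rw [idx_eq_iff] at hcon
    simp only [Fin.val_mk] at hcon
    exact absurd (hcon.2 ▸ Nat.succ_pos _) hc

lemma jmap_eVec_of_eq (b : Idx j) (h : b.2.val + 1 = j b.1) :
    Jmap j (eVec b) = 0 := by
  funext c
  rw [jmap_apply, Pi.zero_apply]
  by_cases hc : 0 < c.2.val
  · rw [dif_pos hc, eVec_apply, ite_eq_right_iff]
    intro hcon
    rw [idx_eq_iff] at hcon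
    simp only [Fin.val_mk] at hcon
    obtain ⟨h1, h2⟩ := hcon
    have hlt : c.2.val < j b.1 := by rw [← h1]; exact c.2.isLt
    omega
  · rw [dif_neg hc]

lemma jmap_eVec_ne_zero_iff (b : Idx j) :
    Jmap j (eVec b) ≠ 0 ↔ b.2.val + 1 < j b.1 := by
  constructor
  · intro h
    by_contra hge
    exact h (jmap_eVec_of_eq b (by have := b.2.isLt; omega))
  · intro h hz
    rw [jmap_eVec_of_lt b h] at hz
    exact eVec_ne_zero _ hz

lemma eVec_mem_span (b c : Idx j)
    (hb : eVec b ∈ (Submodule.span ℂ {eVec c} : Submodule ℂ (Vsp j))) : b = c := by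
  rw [Submodule.mem_span_singleton] at hb
  obtain ⟨a, ha⟩ := hb
  by_contra hbc
  have h1 := congrFun ha b
  rw [Pi.smul_apply, eVec_apply, eVec_apply, if_neg hbc, if_pos rfl, smul_zero] at h1
  exact one_ne_zero h1.symm

lemma zb_map_bot {b : Idx j} (hb : Jmap j (eVec b) = 0)
    {x : ℙ ℂ (Vsp j)} (hx : x ∈ Zb b) :
    Submodule.map (Jmap j) x.submodule = ⊥ := by
  obtain ⟨u, hu, rfl, hub⟩ := hx
  have hcol : j b.1 = b.2.val + 1 := by
    by_contra hne
    have hlt : b.2.val + 1 < j b.1 := by have := b.2.isLt; omega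
    exact (jmap_eVec_ne_zero_iff b).2 hlt hb
  have hJu : Jmap j u = 0 := by
    funext c
    rw [jmap_apply, Pi.zero_apply]
    by_cases hc : 0 < c.2.val
    · rw [dif_pos hc]
      refine hub _ (Or.inl ?_)
      simp only [col, Fin.val_mk]
      have := c.2.isLt
      omega
    · rw [dif_neg hc]
  rw [Projectivization.submodule_mk, Submodule.map_span, Set.image_singleton, hJu,
    Submodule.span_zero_singleton]

end AuxLemmas

theorem statement_7 (n M : ℕ) (hn : 1 ≤ n) (hM : 1 ≤ M) (j : Fin M → ℕ)
    (hpart : Antitone j) (hj : ∀ l, 1 ≤ j l)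
    (p : ZMod n → ℙ ℂ (Vsp j)) (f : ZMod n → Idx j) (hp : IsFixedPt n p f)
    (m : ZMod n → ℕ)
    (hm : ∀ a ∈ startSet n f,
      Jmap j (eVec (f (a + (m a : ZMod n)))) = 0 ∧
        ∀ k < m a, Jmap j (eVec (f (a + (k : ZMod n)))) ≠ 0) :
    (startSet n f).Nonempty ∧
    (∀ a ∈ startSet n f, ∀ b ∈ startSet n f, a ≠ b →
      Disjoint (sigmaSet n m a) (sigmaSet n m b)) ∧
    (⋃ a ∈ startSet n f, sigmaSet n m a) = Set.univ ∧
    ∃ h : ↥(QG n j ∩ {L | ∀ i, L i ∈ Zb (f i)}) ≃ₜ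
        ((a : ↥(startSet n f)) → ↥(Ysp n f m a.val)),
      ∀ (L : ↥(QG n j ∩ {L | ∀ i, L i ∈ Zb (f i)}))
        (a : ↥(startSet n f)) (i : ↥(sigmaSet n m a.val)),
        ((h L a : ↥(sigmaSet n m a.val) → ℙ ℂ (Vsp j)) i) =
          (L : ZMod n → ℙ ℂ (Vsp j)) i.val := by
  classical
  haveI : NeZero n := ⟨by omega⟩
  -- fixed point gives membership of images in spans
  have hspan : ∀ i : ZMod n,
      Jmap j (eVec (f i)) ∈ (Submodule.span ℂ {eVec (f (i + 1))} : Submodule ℂ (Vsp j)) := by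
    intro i
    have h1 := hp.1 i
    rw [hp.2 i, hp.2 (i + 1), Projectivization.submodule_mk, Projectivization.submodule_mk] at h1
    exact h1 (Submodule.mem_map_of_mem (Submodule.mem_span_singleton_self _))
  -- nonemptiness of the start set
  have hne : (startSet n f).Nonempty := by
    by_contra hcon
    rw [Set.not_nonempty_iff_eq_empty] at hcon
    have hnz : ∀ i : ZMod n, Jmap j (eVec (f i)) ≠ 0 := by
      intro i hzero
      have hmem : (i + 1) ∈ startSet n f := by
        show Jmap j (eVec (f (i + 1 - 1))) = 0
        rwa [add_sub_cancel_right]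
      rw [hcon] at hmem
      exact hmem
    have hdec : ∀ i : ZMod n, col (f (i + 1)) < col (f i) := by
      intro i
      have hlt : (f i).2.val + 1 < j (f i).1 := (jmap_eVec_ne_zero_iff _).1 (hnz i)
      have hsp := hspan i
      rw [jmap_eVec_of_lt _ hlt] at hsp
      have heq := eVec_mem_span _ _ hsp
      rw [← heq]
      simp only [col, Fin.val_mk]
      have := (f i).2.isLt
      omega
    have hmono : ∀ k : ℕ, col (f ((k : ℕ) : ZMod n)) + k ≤ col (f ((0 : ℕ) : ZMod n)) := by
      intro k
      induction k with
      | zero => simp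
      | succ k ih =>
        have h1 := hdec ((k : ℕ) : ZMod n)
        have h2 : (((k + 1 : ℕ)) : ZMod n) = ((k : ℕ) : ZMod n) + 1 := by push_cast; ring
        rw [h2]
        omega
    have := hmono (col (f ((0 : ℕ) : ZMod n)) + 1)
    omega
  -- helper: interior points of a segment are not starting vertices
  have hnotstart : ∀ a ∈ startSet n f, ∀ t : ℕ, 1 ≤ t → t ≤ m a →
      a + (t : ZMod n) ∉ startSet n f := by
    intro a ha t h1 h2 hmem
    have hc : a + (t : ZMod n) - 1 = a + ((t - 1 : ℕ) : ZMod n) := by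
      rw [Nat.cast_sub h1]
      push_cast
      ring
    have hJ : Jmap j (eVec (f (a + ((t - 1 : ℕ) : ZMod n)))) = 0 := by
      rw [← hc]; exact hmem
    exact (hm a ha).2 (t - 1) (by omega) hJ
  -- coverage
  have hcov : ∀ i : ZMod n, ∃ a, a ∈ startSet n f ∧ i ∈ sigmaSet n m a := by
    intro i
    obtain ⟨a0, ha0⟩ := hne
    have hex : ∃ k : ℕ, i - (k : ZMod n) ∈ startSet n f :=
      ⟨(i - a0).val, by rwa [ZMod.natCast_val, ZMod.cast_id, sub_sub_cancel]⟩
    set k := Nat.find hex with hkdef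
    have hk : i - (k : ZMod n) ∈ startSet n f := Nat.find_spec hex
    have hklem : k ≤ m (i - (k : ZMod n)) := by
      by_contra hgt
      push_neg at hgt
      have hcast : ((k - (m (i - (k : ZMod n)) + 1) : ℕ) : ZMod n)
          = (k : ZMod n) - ((m (i - (k : ZMod n)) + 1 : ℕ) : ZMod n) :=
        Nat.cast_sub (by omega)
      have hmem : i - ((k - (m (i - (k : ZMod n)) + 1) : ℕ) : ZMod n) ∈ startSet n f := by
        rw [hcast]
        show Jmap j (eVec (f (i - ((k : ZMod n)
          - ((m (i - (k : ZMod n)) + 1 : ℕ) : ZMod n)) - 1))) = 0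
        have harith : i - ((k : ZMod n) - ((m (i - (k : ZMod n)) + 1 : ℕ) : ZMod n)) - 1
            = (i - (k : ZMod n)) + ((m (i - (k : ZMod n)) : ℕ) : ZMod n) := by
          push_cast
          ring
        rw [harith]
        exact (hm _ hk).1
      exact Nat.find_min hex (show k - (m (i - (k : ZMod n)) + 1) < k by omega) hmem
    exact ⟨i - (k : ZMod n), hk, k, hklem, by ring⟩
  -- disjointness
  have hdisj : ∀ a ∈ startSet n f, ∀ b ∈ startSet n f, a ≠ b →
      Disjoint (sigmaSet n m a) (sigmaSet n m b) := by
    have core : ∀ a ∈ startSet n f, ∀ b ∈ startSet n f, a ≠ b →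
        ∀ (k k' : ℕ), k ≤ m a → k' ≤ m b → k' ≤ k → a + (k : ZMod n) = b + (k' : ZMod n) →
        False := by
      intro a ha b hb hab k k' hk hk' hle hx
      have hb' : b = a + ((k - k' : ℕ) : ZMod n) := by
        rw [Nat.cast_sub hle]
        have : b = a + (k : ZMod n) - (k' : ZMod n) := by rw [hx]; ring
        rw [this]; ring
      rcases Nat.eq_zero_or_pos (k - k') with h0 | h0
      · apply hab
        rw [h0] at hb'
        simpa using hb'.symm
      · exact hnotstart a ha (k - k') h0 (by omega) (hb' ▸ hb)
    intro a ha b hb hab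
    rw [Set.disjoint_left]
    rintro x ⟨k, hk, rfl⟩ ⟨k', hk', hx⟩
    rcases le_total k' k with h | h
    · exact core a ha b hb hab k k' hk hk' h hx
    · exact core b hb a ha (Ne.symm hab) k' k hk' hk h hx.symm
  refine ⟨hne, hdisj, ?_, ?_⟩
  · apply Set.eq_univ_of_forall
    intro i
    obtain ⟨a, ha, hia⟩ := hcov i
    exact Set.mem_biUnion ha hia
  -- the homeomorphism
  choose aof haof1 haof2 using hcov
  have huniq : ∀ (i : ZMod n) (a : ZMod n), a ∈ startSet n f → i ∈ sigmaSet n m a →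
      a = aof i := by
    intro i a ha hi
    by_contra hne'
    exact Set.disjoint_left.1 (hdisj a ha (aof i) (haof1 i) hne') hi (haof2 i)
  set A := QG n j ∩ {L | ∀ i, L i ∈ Zb (f i)} with hA
  -- the glued function
  let g : ((a : ↥(startSet n f)) → ↥(Ysp n f m a.val)) → (ZMod n → ℙ ℂ (Vsp j)) :=
    fun Y i => (Y ⟨aof i, haof1 i⟩).val ⟨i, haof2 i⟩
  have key : ∀ (Y : (a : ↥(startSet n f)) → ↥(Ysp n f m a.val)) (i : ZMod n) (a : ZMod n)
      (ha : a ∈ startSet n f) (hi : i ∈ sigmaSet n m a),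
      g Y i = (Y ⟨a, ha⟩).val ⟨i, hi⟩ := by
    intro Y i a ha hi
    have hau : a = aof i := huniq i a ha hi
    subst hau
    rfl
  have hzb : ∀ Y i, g Y i ∈ Zb (f i) := by
    intro Y i
    exact (Y ⟨aof i, haof1 i⟩).prop.1 ⟨i, haof2 i⟩
  have hGmem : ∀ Y, g Y ∈ A := by
    intro Y
    refine ⟨?_, fun i => hzb Y i⟩
    intro i
    by_cases hs : (i + 1) ∈ startSet n f
    · have hz : Jmap j (eVec (f i)) = 0 := by
        have := hs
        show Jmap j (eVec (f i)) = 0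
        have h2 : Jmap j (eVec (f (i + 1 - 1))) = 0 := this
        rwa [add_sub_cancel_right] at h2
      rw [zb_map_bot hz (hzb Y i)]
      exact bot_le
    · obtain ⟨k, hk, hik⟩ := haof2 i
      have hklt : k < m (aof i) := by
        rcases lt_or_eq_of_le hk with h | h
        · exact h
        · exfalso
          apply hs
          show Jmap j (eVec (f (i + 1 - 1))) = 0
          rw [add_sub_cancel_right, hik, h]
          exact (hm _ (haof1 i)).1
      have hedge := (Y ⟨aof i, haof1 i⟩).prop.2 k hklt
      have e1 : g Y i = (Y ⟨aof i, haof1 i⟩).val ⟨aof i + (k : ZMod n), ⟨k, hklt.le, rfl⟩⟩ :=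
        congrArg _ (Subtype.ext hik)
      have hi1 : (i + 1) = aof i + ((k + 1 : ℕ) : ZMod n) := by
        have h3 := congrArg (· + 1) hik
        rw [h3]; push_cast; ring
      have e2 : g Y (i + 1) = (Y ⟨aof i, haof1 i⟩).val
          ⟨aof i + ((k + 1 : ℕ) : ZMod n), ⟨k + 1, hklt, rfl⟩⟩ := by
        rw [key Y (i + 1) (aof i) (haof1 i) ⟨k + 1, hklt, hi1⟩]
        exact congrArg _ (Subtype.ext hi1)
      rw [e1, e2]
      exact hedge
  have hFmem : ∀ (L : ↥A) (a : ↥(startSet n f)),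
      (fun i : ↥(sigmaSet n m a.val) => L.val i.val) ∈ Ysp n f m a.val := by
    intro L a
    refine ⟨fun i => L.prop.2 i.val, ?_⟩
    intro k hk
    have h1 := L.prop.1 (a.val + (k : ZMod n))
    have hc : a.val + (k : ZMod n) + 1 = a.val + ((k + 1 : ℕ) : ZMod n) := by
      push_cast; ring
    rwa [hc] at h1
  let F : ↥A → ((a : ↥(startSet n f)) → ↥(Ysp n f m a.val)) :=
    fun L a => ⟨fun i => L.val i.val, hFmem L a⟩
  let G : ((a : ↥(startSet n f)) → ↥(Ysp n f m a.val)) → ↥A :=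
    fun Y => ⟨g Y, hGmem Y⟩
  have hleft : ∀ L, G (F L) = L := by
    intro L
    apply Subtype.ext
    funext i
    rfl
  have hright : ∀ Y, F (G Y) = Y := by
    intro Y
    funext a
    apply Subtype.ext
    funext i
    exact key Y i.val a.val a.prop i.prop
  refine ⟨⟨⟨F, G, hleft, hright⟩, ?_, ?_⟩, ?_⟩
  · -- continuity of F
    apply continuous_pi
    intro a
    apply Continuous.subtype_mk
    apply continuous_pi
    intro i
    exact (continuous_apply i.val).comp continuous_subtype_val
  · -- continuity of G
    apply Continuous.subtype_mk
    apply continuous_pi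
    intro i
    exact ((continuous_apply _).comp (continuous_subtype_val.comp (continuous_apply _)))
  · intro L a i
    rfl
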